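/- Assume r_0 >= 1 and that v lies in S. Let c >= 1 be an integer with -v(a_i) <= c for every i with a_i != 0, and let m >= 0 be the least integer with q^(r_0 * m) >= c. Let x be a nonzero element of L with v(x) < N_v. Then either there exists n with 0 <= n <= m-1 such that phi^n(x) != 0 and Exc(phi^n(x)) holds, or v(phi^m(x)) <= 0. (The descent dichotomy underlying Lemma 2.14 of the paper: after at most m iterations, where q^(r_0 m) is comparable to c, either an iterate is exceptional or the orbit reaches non-positive valuation.) -/

import Mathlib

open Filter Topology Finset

universe u

section Drinfeld

variable {L : Type u} [Field L] {k : Type*} [Field k]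

/-- The integer value of the valuation `v` at `y` (junk value `0` at `y = 0`). -/
noncomputable def vz (v : L → WithTop ℤ) (y : L) : ℤ := WithTop.untopD 0 (v y)

/-- `v : L → ℤ ∪ {∞}` is a normalized discrete valuation: `v 0 = ∞`, `v` is finite and
surjective onto `ℤ` on nonzero elements, `v (x * y) = v x + v y` and
`v (x + y) ≥ min (v x) (v y)`. -/
structure IsDVal (v : L → WithTop ℤ) : Prop where
  map_zero : v 0 = ⊤
  ne_top : ∀ x : L, x ≠ 0 → v x ≠ ⊤
  map_mul : ∀ x y : L, v (x * y) = v x + v y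
  add_min : ∀ x y : L, min (v x) (v y) ≤ v (x + y)
  surj : ∀ n : ℤ, ∃ x : L, v x = (n : WithTop ℤ)

/-- `res : L → k` restricted to the valuation ring of `v` is the quotient map onto the
residue field `k` of `v`. -/
structure IsResidue (v : L → WithTop ℤ) (res : L → k) : Prop where
  map_one : res 1 = 1
  map_add : ∀ x y : L, 0 ≤ v x → 0 ≤ v y → res (x + y) = res x + res y
  map_mul : ∀ x y : L, 0 ≤ v x → 0 ≤ v y → res (x * y) = res x * res y
  eq_zero_iff : ∀ x : L, 0 ≤ v x → (res x = 0 ↔ 0 < v x)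
  surj : ∀ c : k, ∃ x : L, 0 ≤ v x ∧ res x = c

/-- The angular component of `y` at `v`, with respect to the uniformizer `π` and the
residue map `res`: the residue of `y * π ^ (-v y)`. -/
noncomputable def ac (v : L → WithTop ℤ) (π : L) (res : L → k) (y : L) : k :=
  res (y * π ^ (-(vz v y)))

/-- The `F_q`-linear map `φ(x) = ∑_{i=r₀}^{r} a i * x^(q^i)`. -/
noncomputable def phiMap (q r₀ r : ℕ) (a : ℕ → L) (x : L) : L :=
  ∑ i ∈ Finset.Icc r₀ r, a i * x ^ q ^ i

/-- The set `P_v ⊆ ℚ` of possible exceptional valuations: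
`(v(a i) - v(a j))/(q^j - q^i)` for `r₀ ≤ i < j ≤ r` with `a i ≠ 0 ≠ a j`, together with `0`. -/
def Pset (q : ℕ) (v : L → WithTop ℤ) (r₀ r : ℕ) (a : ℕ → L) : Set ℚ :=
  {0} ∪ {α : ℚ | ∃ i j : ℕ, r₀ ≤ i ∧ i < j ∧ j ≤ r ∧ a i ≠ 0 ∧ a j ≠ 0 ∧
      α = ((vz v (a i) : ℚ) - (vz v (a j) : ℚ)) / ((q : ℚ) ^ j - (q : ℚ) ^ i)}

/-- The set `J(α)` of indices where `v(a i) + q^i * α` attains its minimum. -/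
def Jset (q : ℕ) (v : L → WithTop ℤ) (r₀ r : ℕ) (a : ℕ → L) (α : ℚ) : Set ℕ :=
  {i : ℕ | r₀ ≤ i ∧ i ≤ r ∧ a i ≠ 0 ∧
    ∀ j : ℕ, r₀ ≤ j → j ≤ r → a j ≠ 0 →
      (vz v (a i) : ℚ) + (q : ℚ) ^ i * α ≤ (vz v (a j) : ℚ) + (q : ℚ) ^ j * α}

open scoped Classical in
/-- The set `R_v(α) ⊆ k_v`: `1` together with the nonzero roots of
`∑_{i ∈ J(α)} ac(a i) * X^(q^i)`. -/
noncomputable def Rset (q : ℕ) (v : L → WithTop ℤ) (π : L) (res : L → k)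
    (r₀ r : ℕ) (a : ℕ → L) (α : ℚ) : Set k :=
  {1} ∪ {γ : k | γ ≠ 0 ∧
    ∑ i ∈ Finset.Icc r₀ r,
      (if i ∈ Jset q v r₀ r a α then ac v π res (a i) * γ ^ q ^ i else 0) = 0}

/-- The exceptional condition `Exc(y)`: `v y ∈ P_v` and `ac y ∈ R_v(v y)`. -/
def Exc (q : ℕ) (v : L → WithTop ℤ) (π : L) (res : L → k)
    (r₀ r : ℕ) (a : ℕ → L) (y : L) : Prop :=
  ((vz v y : ℚ) ∈ Pset q v r₀ r a) ∧ ac v π res y ∈ Rset q v π res r₀ r a ((vz v y : ℚ))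

/-- The sequence `min(0, v(φⁿ x)) / q^(r n)` whose limit is minus the local height of `x`. -/
noncomputable def locSeq (q r : ℕ) (v : L → WithTop ℤ) (φ : L → L) (x : L) (n : ℕ) : ℝ :=
  ((min 0 (vz v (φ^[n] x)) : ℤ) : ℝ) / (q : ℝ) ^ (r * n)


section Aux

variable {v : L → WithTop ℤ} {π : L} {res : L → k}

namespace IsDVal

lemma v_one (hv : IsDVal v) : v 1 = 0 := by
  have h := hv.map_mul 1 1
  rw [mul_one] at h
  have h1 : v 1 ≠ ⊤ := hv.ne_top 1 one_ne_zero
  lift v 1 to ℤ using h1 with n hn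
  rw [← WithTop.coe_add, WithTop.coe_eq_coe] at h
  have : n = 0 := by omega
  simp [this]

lemma vz_spec (hv : IsDVal v) {y : L} (hy : y ≠ 0) : v y = (vz v y : WithTop ℤ) := by
  lift v y to ℤ using hv.ne_top y hy with n hn
  simp [vz, ← hn]

lemma vz_mul (hv : IsDVal v) {x y : L} (hx : x ≠ 0) (hy : y ≠ 0) :
    vz v (x * y) = vz v x + vz v y := by
  have h := hv.map_mul x y
  rw [hv.vz_spec hx, hv.vz_spec hy, hv.vz_spec (mul_ne_zero hx hy), ← WithTop.coe_add,
    WithTop.coe_eq_coe] at h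
  exact h

lemma vz_one (hv : IsDVal v) : vz v 1 = 0 := by simp [vz, hv.v_one]

lemma vz_pow (hv : IsDVal v) {y : L} (hy : y ≠ 0) (n : ℕ) :
    vz v (y ^ n) = n * vz v y := by
  induction n with
  | zero => simpa using hv.vz_one
  | succ n ih =>
      rw [pow_succ, hv.vz_mul (pow_ne_zero n hy) hy, ih]
      push_cast; ring

lemma vz_inv (hv : IsDVal v) {y : L} (hy : y ≠ 0) : vz v y⁻¹ = -vz v y := by
  have h := hv.vz_mul hy (inv_ne_zero hy)
  rw [mul_inv_cancel₀ hy, hv.vz_one] at h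
  omega

lemma vz_zpow (hv : IsDVal v) {y : L} (hy : y ≠ 0) (n : ℤ) :
    vz v (y ^ n) = n * vz v y := by
  cases n with
  | ofNat n => rw [Int.ofNat_eq_coe, zpow_natCast, hv.vz_pow hy]
  | negSucc n =>
      rw [zpow_negSucc, hv.vz_inv (pow_ne_zero _ hy), hv.vz_pow hy, Int.negSucc_eq]
      push_cast; ring

end IsDVal

section Basic

variable {v : L → WithTop ℤ} {π : L} {res : L → k}

lemma pi_ne_zero (hv : IsDVal v) (hπ : v π = 1) : π ≠ 0 := by
  intro h; rw [h, hv.map_zero] at hπ; exact (by simp : (⊤ : WithTop ℤ) ≠ 1) hπ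

lemma vz_pi (hv : IsDVal v) (hπ : v π = 1) : vz v π = 1 := by
  simp [vz, hπ]

lemma vz_pi_zpow (hv : IsDVal v) (hπ : v π = 1) (n : ℤ) : vz v (π ^ n) = n := by
  rw [hv.vz_zpow (pi_ne_zero hv hπ), vz_pi hv hπ, mul_one]

lemma v_eq_zero_of_vz (hv : IsDVal v) {y : L} (hy : y ≠ 0) (h : vz v y = 0) : v y = 0 := by
  rw [hv.vz_spec hy, h]; rfl

/-- The "unit part" `y * π ^ (-v y)` has valuation zero. -/
lemma v_unit_part (hv : IsDVal v) (hπ : v π = 1) {y : L} (hy : y ≠ 0) :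
    v (y * π ^ (-(vz v y))) = 0 := by
  have hπ0 : π ≠ 0 := pi_ne_zero hv hπ
  have hne : y * π ^ (-(vz v y)) ≠ 0 := mul_ne_zero hy (zpow_ne_zero _ hπ0)
  apply v_eq_zero_of_vz hv hne
  rw [hv.vz_mul hy (zpow_ne_zero _ hπ0), vz_pi_zpow hv hπ]
  ring

lemma res_zero (hres : IsResidue v res) (hv : IsDVal v) : res (0 : L) = (0 : k) := by
  rw [(hres.eq_zero_iff 0 (by simp [hv.map_zero]))]
  simp [hv.map_zero]

lemma ac_ne_zero (hv : IsDVal v) (hπ : v π = 1) (hres : IsResidue v res) {y : L}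
    (hy : y ≠ 0) : ac v π res y ≠ 0 := by
  intro h
  have h0 := v_unit_part hv hπ hy (π := π)
  have := (hres.eq_zero_iff _ (le_of_eq h0.symm)).mp h
  rw [h0] at this
  exact lt_irrefl _ this

lemma v_pow_nonneg (hv : IsDVal v) {y : L} (h : 0 ≤ v y) (n : ℕ) : 0 ≤ v (y ^ n) := by
  induction n with
  | zero => rw [pow_zero, hv.v_one]
  | succ n ih =>
      rw [pow_succ, hv.map_mul]
      exact add_nonneg ih h

lemma res_pow (hv : IsDVal v) (hres : IsResidue v res) {y : L} (h : 0 ≤ v y) (n : ℕ) :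
    res (y ^ n) = res y ^ n := by
  induction n with
  | zero => simpa using hres.map_one
  | succ n ih =>
      rw [pow_succ, hres.map_mul _ _ (v_pow_nonneg hv h n) h, ih, pow_succ]

lemma v_sum_nonneg (hv : IsDVal v) {ι : Type*} {s : Finset ι} {f : ι → L}
    (h : ∀ i ∈ s, 0 ≤ v (f i)) : 0 ≤ v (∑ i ∈ s, f i) := by
  classical
  induction s using Finset.cons_induction with
  | empty => simp [hv.map_zero]
  | cons a s ha ih =>
      rw [Finset.sum_cons]
      refine le_trans ?_ (hv.add_min _ _)
      exact le_min (h a (Finset.mem_cons_self a s))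
        (ih fun i hi => h i (Finset.mem_cons_of_mem hi))

lemma res_sum (hv : IsDVal v) (hres : IsResidue v res) {ι : Type*} {s : Finset ι} {f : ι → L}
    (h : ∀ i ∈ s, 0 ≤ v (f i)) : res (∑ i ∈ s, f i) = ∑ i ∈ s, res (f i) := by
  classical
  induction s using Finset.cons_induction with
  | empty => simpa using res_zero hres hv
  | cons a s ha ih =>
      rw [Finset.sum_cons, Finset.sum_cons,
        hres.map_add _ _ (h a (Finset.mem_cons_self a s))
          (v_sum_nonneg hv fun i hi => h i (Finset.mem_cons_of_mem hi)),
        ih fun i hi => h i (Finset.mem_cons_of_mem hi)]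

end Basic


section Key

variable {v : L → WithTop ℤ} {π : L} {res : L → k}

open Finset

lemma key_lemma {q r₀ r : ℕ} {a : ℕ → L} (hq2 : 2 ≤ q)
    (hv : IsDVal v) (hπ : v π = 1) (hres : IsResidue v res)
    (hr₀r : r₀ ≤ r) (har : a r = 1)
    {y : L} (hy : y ≠ 0) (hexc : ¬ Exc q v π res r₀ r a y) :
    ∃ M : ℤ, v (phiMap q r₀ r a y) = (M : WithTop ℤ) ∧
      ∀ i ∈ Finset.Icc r₀ r, a i ≠ 0 → M ≤ vz v (a i) + (q : ℤ) ^ i * vz v y := by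
  classical
  have hπ0 : π ≠ 0 := pi_ne_zero hv hπ
  set w : ℤ := vz v y with hw
  set T : ℕ → ℤ := fun i => vz v (a i) + (q : ℤ) ^ i * w with hT
  set D : Finset ℕ := (Finset.Icc r₀ r).filter (fun i => a i ≠ 0) with hD
  have hrD : r ∈ D := by
    simp only [hD, Finset.mem_filter, Finset.mem_Icc]
    exact ⟨⟨hr₀r, le_refl r⟩, by rw [har]; exact one_ne_zero⟩
  have hDne : D.Nonempty := ⟨r, hrD⟩
  set M : ℤ := D.inf' hDne T with hM
  have hMle : ∀ i ∈ D, M ≤ T i := fun i hi => Finset.inf'_le T hi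
  have hmemD : ∀ i, i ∈ D ↔ (r₀ ≤ i ∧ i ≤ r ∧ a i ≠ 0) := by
    intro i
    simp only [hD, Finset.mem_filter, Finset.mem_Icc]
    tauto
  -- characterization of Jset
  have hJ : ∀ i, i ∈ Jset q v r₀ r a (w : ℚ) ↔ (i ∈ D ∧ T i = M) := by
    intro i
    constructor
    · rintro ⟨h1, h2, h3, h4⟩
      have hiD : i ∈ D := (hmemD i).mpr ⟨h1, h2, h3⟩
      refine ⟨hiD, le_antisymm ?_ (hMle i hiD)⟩
      obtain ⟨j, hjD, hje⟩ := Finset.exists_mem_eq_inf' hDne T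
      rw [← hM] at hje
      rw [hje]
      obtain ⟨hj1, hj2, hj3⟩ := (hmemD j).mp hjD
      have h5 := h4 j hj1 hj2 hj3
      have h6 : (T i : ℚ) ≤ (T j : ℚ) := by
        simp only [hT]
        push_cast
        convert h5 using 2 <;> push_cast <;> ring
      exact_mod_cast h6
    · rintro ⟨hiD, hTi⟩
      obtain ⟨h1, h2, h3⟩ := (hmemD i).mp hiD
      refine ⟨h1, h2, h3, ?_⟩
      intro j hj1 hj2 hj3
      have hjD : j ∈ D := (hmemD j).mpr ⟨hj1, hj2, hj3⟩
      have h := hMle j hjD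
      rw [← hTi] at h
      have h6 : (T i : ℚ) ≤ (T j : ℚ) := by exact_mod_cast h
      simp only [hT] at h6
      push_cast at h6
      convert h6 using 2 <;> push_cast <;> ring
  set u : L := y * π ^ (-w) with hu
  have hvu : v u = 0 := v_unit_part hv hπ hy
  have hu0 : u ≠ 0 := mul_ne_zero hy (zpow_ne_zero _ hπ0)
  have hacy : ac v π res y = res u := rfl
  set g : ℕ → L := fun i => (a i * π ^ (-(vz v (a i)))) * u ^ (q ^ i) * π ^ (T i - M)
    with hg
  -- decomposition of phiMap
  have hπadd : ∀ e₁ e₂ : ℤ, π ^ e₁ * π ^ e₂ = π ^ (e₁ + e₂) :=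
    fun e₁ e₂ => (zpow_add₀ hπ0 e₁ e₂).symm
  have hgsum : phiMap q r₀ r a y = (∑ i ∈ Finset.Icc r₀ r, g i) * π ^ (M : ℤ) := by
    rw [Finset.sum_mul, phiMap]
    refine Finset.sum_congr rfl fun i _ => ?_
    by_cases hai : a i = 0
    · simp [hg, hai]
    · have hy_eq : y = u * π ^ w := by
        rw [hu, mul_assoc, ← zpow_add₀ hπ0]
        simp
      have e1 : y ^ q ^ i = u ^ q ^ i * π ^ ((q : ℤ) ^ i * w) := by
        rw [hy_eq, mul_pow, ← zpow_natCast (π ^ w), ← zpow_mul]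
        congr 2
        push_cast
        ring
      have e2 : π ^ (-(vz v (a i))) * π ^ (T i - M) * π ^ (M : ℤ)
          = π ^ ((q : ℤ) ^ i * w) := by
        rw [hπadd, hπadd]
        congr 1
        simp only [hT]
        ring
      calc a i * y ^ q ^ i = a i * (u ^ q ^ i * π ^ ((q : ℤ) ^ i * w)) := by rw [e1]
        _ = g i * π ^ (M : ℤ) := by rw [hg]; simp only []; rw [← e2]; ring
  -- valuation and residue of the summands
  have hmain : ∀ i ∈ Finset.Icc r₀ r, 0 ≤ v (g i) ∧
      res (g i) = (if i ∈ Jset q v r₀ r a (w : ℚ)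
        then ac v π res (a i) * (ac v π res y) ^ q ^ i else 0) := by
    intro i hi
    rw [Finset.mem_Icc] at hi
    by_cases hai : a i = 0
    · have hnJ : i ∉ Jset q v r₀ r a (w : ℚ) := by
        rw [hJ]
        rintro ⟨hiD, -⟩
        exact ((hmemD i).mp hiD).2.2 hai
      simp [hg, hai, hv.map_zero, hnJ, res_zero hres hv]
    · have hiD : i ∈ D := (hmemD i).mpr ⟨hi.1, hi.2, hai⟩
      have hc0 : v (a i * π ^ (-(vz v (a i)))) = 0 := v_unit_part hv hπ hai
      have hupow : v (u ^ q ^ i) = 0 := by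
        refine v_eq_zero_of_vz hv (pow_ne_zero _ hu0) ?_
        rw [hv.vz_pow hu0]
        have : vz v u = 0 := by simp [vz, hvu]
        rw [this, mul_zero]
      have hTM : (0 : ℤ) ≤ T i - M := sub_nonneg.mpr (hMle i hiD)
      have hπe : v (π ^ (T i - M)) = ((T i - M : ℤ) : WithTop ℤ) := by
        rw [hv.vz_spec (zpow_ne_zero _ hπ0), vz_pi_zpow hv hπ]
      have hπe0 : 0 ≤ v (π ^ (T i - M)) := by
        rw [hπe]
        exact_mod_cast hTM
      have hcu0 : v (a i * π ^ (-(vz v (a i))) * u ^ q ^ i) = 0 := by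
        rw [hv.map_mul, hc0, hupow, add_zero]
      constructor
      · rw [hg]
        simp only []
        rw [hv.map_mul, hcu0, zero_add]
        exact hπe0
      · have hsplit : res (g i)
            = (ac v π res (a i) * (ac v π res y) ^ q ^ i) * res (π ^ (T i - M)) := by
          rw [hg]
          simp only []
          rw [hres.map_mul _ _ (le_of_eq hcu0.symm) hπe0,
            hres.map_mul _ _ (le_of_eq hc0.symm) (le_of_eq hupow.symm),
            res_pow hv hres (le_of_eq hvu.symm)]
          rfl
        by_cases hTMi : T i = M
        · have hJi : i ∈ Jset q v r₀ r a (w : ℚ) := (hJ i).mpr ⟨hiD, hTMi⟩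
          have : π ^ (T i - M) = 1 := by rw [hTMi, sub_self, zpow_zero]
          rw [hsplit, this, hres.map_one, mul_one, if_pos hJi]
        · have hJi : i ∉ Jset q v r₀ r a (w : ℚ) := by
            rw [hJ]
            rintro ⟨-, h⟩
            exact hTMi h
          have hpos : 0 < v (π ^ (T i - M)) := by
            rw [hπe]
            have : (0 : ℤ) < T i - M := lt_of_le_of_ne hTM (fun h => hTMi (by omega))
            exact_mod_cast this
          rw [hsplit, (hres.eq_zero_iff _ hπe0).mpr hpos, mul_zero, if_neg hJi]
  -- the residue of the leading sum is nonzero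
  have hSig0 : ∑ i ∈ Finset.Icc r₀ r,
      (if i ∈ Jset q v r₀ r a (w : ℚ)
        then ac v π res (a i) * (ac v π res y) ^ q ^ i else 0) ≠ 0 := by
    intro h0
    have hay : ac v π res y ≠ 0 := ac_ne_zero hv hπ hres hy
    have hexc' : ¬ (((vz v y : ℚ) ∈ Pset q v r₀ r a) ∧
        ac v π res y ∈ Rset q v π res r₀ r a ((vz v y : ℚ))) := hexc
    rw [← hw] at hexc'
    have hRmem : ac v π res y ∈ Rset q v π res r₀ r a ((w : ℚ)) := by
      refine Or.inr ⟨hay, Eq.trans ?_ h0⟩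
      exact Finset.sum_congr rfl fun i _ => by
        by_cases hJi : i ∈ Jset q v r₀ r a (w : ℚ) <;> simp [hJi]
    have hP : ((w : ℚ) ∉ Pset q v r₀ r a) := fun hp => hexc' ⟨hp, hRmem⟩
    obtain ⟨i₀, hi₀D, hi₀⟩ := Finset.exists_mem_eq_inf' hDne T
    rw [← hM] at hi₀
    have hi₀J : i₀ ∈ Jset q v r₀ r a (w : ℚ) := (hJ i₀).mpr ⟨hi₀D, hi₀.symm⟩
    have hpair : ∀ i j : ℕ, i < j → i ∈ Jset q v r₀ r a (w : ℚ) →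
        j ∈ Jset q v r₀ r a (w : ℚ) → (w : ℚ) ∈ Pset q v r₀ r a := by
      intro i j hij hiJ hjJ
      obtain ⟨hiD, hTi⟩ := (hJ i).mp hiJ
      obtain ⟨hjD, hTj⟩ := (hJ j).mp hjJ
      obtain ⟨hi1, hi2, hi3⟩ := (hmemD i).mp hiD
      obtain ⟨hj1, hj2, hj3⟩ := (hmemD j).mp hjD
      refine Or.inr ⟨i, j, hi1, hij, hj2, hi3, hj3, ?_⟩
      have hq1 : (1 : ℚ) < (q : ℚ) := by exact_mod_cast hq2
      have hd : (q : ℚ) ^ i < (q : ℚ) ^ j :=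
        pow_lt_pow_right₀ hq1 hij
      have hTeq : vz v (a i) + (q : ℤ) ^ i * w = vz v (a j) + (q : ℤ) ^ j * w := by
        have := hTi.trans hTj.symm
        simpa only [hT] using this
      have hQ : ((vz v (a i) : ℚ) - (vz v (a j) : ℚ))
          = (((q : ℚ) ^ j - (q : ℚ) ^ i)) * (w : ℚ) := by
        have : ((vz v (a i) : ℚ)) + ((q : ℤ) ^ i : ℚ) * (w : ℚ)
            = ((vz v (a j) : ℚ)) + ((q : ℤ) ^ j : ℚ) * (w : ℚ) := by exact_mod_cast hTeq
        push_cast at this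
        linarith
      rw [eq_div_iff (by linarith : ((q : ℚ) ^ j - (q : ℚ) ^ i) ≠ 0)]
      linarith [hQ]
    by_cases hsing : ∀ j ∈ Finset.Icc r₀ r, j ∈ Jset q v r₀ r a (w : ℚ) → j = i₀
    · have hone : ∑ i ∈ Finset.Icc r₀ r,
          (if i ∈ Jset q v r₀ r a (w : ℚ)
            then ac v π res (a i) * (ac v π res y) ^ q ^ i else 0)
          = ac v π res (a i₀) * (ac v π res y) ^ q ^ i₀ := by
        have hi₀mem : i₀ ∈ Finset.Icc r₀ r := by
          obtain ⟨h1, h2, -⟩ := (hmemD i₀).mp hi₀D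
          rw [Finset.mem_Icc]; exact ⟨h1, h2⟩
        rw [Finset.sum_eq_single i₀]
        · rw [if_pos hi₀J]
        · intro j hj hne
          rw [if_neg]
          exact fun hmem => hne (hsing j hj hmem)
        · intro h
          exact absurd hi₀mem h
      rw [hone] at h0
      have hai₀ : a i₀ ≠ 0 := ((hmemD i₀).mp hi₀D).2.2
      exact (mul_ne_zero (ac_ne_zero hv hπ hres hai₀) (pow_ne_zero _ hay)) h0
    · push_neg at hsing
      obtain ⟨j, hjmem, hjJ, hjne⟩ := hsing
      rcases lt_or_gt_of_ne hjne with h | h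
      · exact hP (hpair j i₀ h hjJ hi₀J)
      · exact hP (hpair i₀ j h hi₀J hjJ)
  -- conclude
  have hz1 : 0 ≤ v (∑ i ∈ Finset.Icc r₀ r, g i) :=
    v_sum_nonneg hv fun i hi => (hmain i hi).1
  have hresz : res (∑ i ∈ Finset.Icc r₀ r, g i)
      = ∑ i ∈ Finset.Icc r₀ r,
        (if i ∈ Jset q v r₀ r a (w : ℚ)
          then ac v π res (a i) * (ac v π res y) ^ q ^ i else 0) := by
    rw [res_sum hv hres fun i hi => (hmain i hi).1]
    exact Finset.sum_congr rfl fun i hi => (hmain i hi).2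
  have hz0 : v (∑ i ∈ Finset.Icc r₀ r, g i) = 0 := by
    refine le_antisymm (not_lt.mp fun h => ?_) hz1
    exact hSig0 (hresz ▸ (hres.eq_zero_iff _ hz1).mpr h)
  refine ⟨M, ?_, ?_⟩
  · rw [hgsum, hv.map_mul, hz0, zero_add, hv.vz_spec (zpow_ne_zero _ hπ0),
      vz_pi_zpow hv hπ]
  · intro i hi hai
    rw [Finset.mem_Icc] at hi
    have := hMle i ((hmemD i).mpr ⟨hi.1, hi.2, hai⟩)
    simpa only [hT] using this

end Key

end Aux

/-- The descent dichotomy underlying Lemma 2.14: if `r₀ ≥ 1`, `v ∈ S`, `-v(a i) ≤ c` for all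
`i` with `a i ≠ 0`, `m` is the least integer with `q^(r₀ m) ≥ c`, and `v(x) < N_v`, then
either some iterate `φⁿ(x)` with `n ≤ m - 1` is nonzero and exceptional, or
`v(φᵐ(x)) ≤ 0`. -/
theorem statement11
    (p q : ℕ) (hp : p.Prime) (hq : ∃ s : ℕ, 0 < s ∧ q = p ^ s)
    [CharP L p] (F : Subfield L) (hF : Nat.card F = q)
    (v : L → WithTop ℤ) (hv : IsDVal v)
    (π : L) (hπ : v π = 1) (res : L → k) (hres : IsResidue v res)
    (r₀ r : ℕ) (hr1 : 1 ≤ r) (hr₀r : r₀ ≤ r) (hr₀1 : 1 ≤ r₀)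
    (a : ℕ → L) (har₀ : a r₀ ≠ 0) (har : a r = 1)
    (hS : ∃ i ∈ Finset.Icc r₀ (r - 1), v (a i) < 0)
    (c : ℕ) (hc : 1 ≤ c)
    (hbound : ∀ i ∈ Finset.Icc r₀ r, a i ≠ 0 → -(vz v (a i)) ≤ (c : ℤ))
    (m : ℕ) (hm : IsLeast {m' : ℕ | c ≤ q ^ (r₀ * m')} m)
    (x : L) (hx : x ≠ 0)
    (hN : ∃ i ∈ Finset.Icc r₀ r, a i ≠ 0 ∧
      (vz v x : ℚ) < -(vz v (a i) : ℚ) / ((q : ℚ) ^ i - 1)) :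
    (∃ n : ℕ, n < m ∧ (phiMap q r₀ r a)^[n] x ≠ 0 ∧
      Exc q v π res r₀ r a ((phiMap q r₀ r a)^[n] x)) ∨
    v ((phiMap q r₀ r a)^[m] x) ≤ 0 := by
  classical
  have hq2 : 2 ≤ q := by
    obtain ⟨s, hs, rfl⟩ := hq
    calc 2 ≤ p := hp.two_le
      _ ≤ p ^ s := Nat.le_self_pow hs.ne' p
  by_cases hE : ∃ n : ℕ, n < m ∧ (phiMap q r₀ r a)^[n] x ≠ 0 ∧
      Exc q v π res r₀ r a ((phiMap q r₀ r a)^[n] x)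
  · exact Or.inl hE
  push_neg at hE
  right
  obtain ⟨i₁, hi₁mem, hai₁, hlt⟩ := hN
  have hi₁r₀ : r₀ ≤ i₁ := (Finset.mem_Icc.mp hi₁mem).1
  have hi₁1 : 1 ≤ i₁ := le_trans hr₀1 hi₁r₀
  set A : ℤ := vz v (a i₁) with hA
  set Q : ℤ := (q : ℤ) ^ i₁ with hQ
  have hq1 : (1 : ℤ) ≤ (q : ℤ) := by exact_mod_cast (by omega : 1 ≤ q)
  have hQl : (q : ℤ) ^ r₀ ≤ Q := pow_le_pow_right₀ hq1 hi₁r₀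
  have hQ2 : (2 : ℤ) ≤ Q := by
    calc (2 : ℤ) ≤ (q : ℤ) := by exact_mod_cast hq2
      _ = (q : ℤ) ^ 1 := (pow_one _).symm
      _ ≤ Q := pow_le_pow_right₀ hq1 hi₁1
  -- initial gap
  have hden : (0 : ℚ) < (q : ℚ) ^ i₁ - 1 := by
    have h1 : (1 : ℚ) < (q : ℚ) := by exact_mod_cast hq2
    have : (1 : ℚ) < (q : ℚ) ^ i₁ := one_lt_pow₀ h1 (by omega)
    linarith
  have hg0' : (vz v x : ℚ) * ((q : ℚ) ^ i₁ - 1) < -(A : ℚ) := by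
    rw [← lt_div_iff₀ hden]
    exact hlt
  have hg0'' : vz v x * ((q : ℤ) ^ i₁ - 1) < -A := by exact_mod_cast hg0'
  have hg0 : 1 ≤ -A - (Q - 1) * vz v x := by nlinarith [hg0'']
  -- main induction
  have claim : ∀ n : ℕ, n ≤ m → (phiMap q r₀ r a)^[n] x ≠ 0 ∧
      (q : ℤ) ^ (r₀ * n) ≤ -A - (Q - 1) * vz v ((phiMap q r₀ r a)^[n] x) := by
    intro n
    induction n with
    | zero => intro _; exact ⟨hx, by simpa using hg0⟩
    | succ n ih =>
        intro hn1
        have hn : n < m := by omega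
        obtain ⟨hne, hgn⟩ := ih (by omega)
        have hnexc := hE n hn hne
        obtain ⟨M, hvM, hMle⟩ := key_lemma hq2 hv hπ hres hr₀r har hne hnexc
        have hstep : (phiMap q r₀ r a)^[n + 1] x
            = phiMap q r₀ r a ((phiMap q r₀ r a)^[n] x) :=
          Function.iterate_succ_apply' _ _ _
        have hne1 : (phiMap q r₀ r a)^[n + 1] x ≠ 0 := by
          rw [hstep]
          intro h
          rw [h, hv.map_zero] at hvM
          exact (by simp : (⊤ : WithTop ℤ) ≠ (M : WithTop ℤ)) hvM
        have hvz1 : vz v ((phiMap q r₀ r a)^[n + 1] x) = M := by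
          rw [hstep]
          simp [vz, hvM]
        have hMle1 : M ≤ A + Q * vz v ((phiMap q r₀ r a)^[n] x) :=
          hMle i₁ hi₁mem hai₁
        refine ⟨hne1, ?_⟩
        rw [hvz1]
        have hQ0 : (0 : ℤ) ≤ Q := by linarith
        have hpow0 : (0 : ℤ) < (q : ℤ) ^ (r₀ * n) := pow_pos (by linarith) _
        have e1 : (q : ℤ) ^ (r₀ * (n + 1)) = (q : ℤ) ^ (r₀ * n) * (q : ℤ) ^ r₀ := by
          rw [← pow_add, Nat.mul_succ]
        set wn : ℤ := vz v ((phiMap q r₀ r a)^[n] x) with hwn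
        have k1 : (q : ℤ) ^ (r₀ * n) * (q : ℤ) ^ r₀ ≤ (q : ℤ) ^ (r₀ * n) * Q :=
          mul_le_mul_of_nonneg_left hQl (le_of_lt hpow0)
        have k2 : (q : ℤ) ^ (r₀ * n) * Q ≤ (-A - (Q - 1) * wn) * Q :=
          mul_le_mul_of_nonneg_right hgn (by linarith)
        have k3 : (Q - 1) * M ≤ (Q - 1) * (A + Q * wn) :=
          mul_le_mul_of_nonneg_left hMle1 (by linarith)
        have k4 : (-A - (Q - 1) * wn) * Q ≤ -A - (Q - 1) * M := by nlinarith [k3]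
        rw [e1]
        linarith
  obtain ⟨hnem, hgm⟩ := claim m le_rfl
  have hc' : (c : ℤ) ≤ (q : ℤ) ^ (r₀ * m) := by exact_mod_cast hm.1
  have hbd : -A ≤ (c : ℤ) := hbound i₁ hi₁mem hai₁
  have hwm0 : vz v ((phiMap q r₀ r a)^[m] x) ≤ 0 := by
    set wm : ℤ := vz v ((phiMap q r₀ r a)^[m] x) with hwm
    nlinarith [hgm, hc', hbd, hQ2]
  rw [hv.vz_spec hnem]
  exact_mod_cast hwm0


end Drinfeld
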